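/- Let G be a finite group whose power graph has star set S = {1}, and let C = [y]_N be a critical class. Then C is of plain type if and only if there exists x ∈ G \ Ĉ such that |[x]_N| ≤ |C| and {x, y} is an edge of P(G). -/

import Mathlib

/-- Closed neighbourhood of a vertex. -/
def closedNbhd {V : Type*} (Γ : SimpleGraph V) (x : V) : Set V := {y | Γ.Adj x y} ∪ {x}

/-- Closed neighbourhood of a set of vertices (intersection convention; N[∅] = univ). -/
def closedNbhdSet {V : Type*} (Γ : SimpleGraph V) (X : Set V) : Set V :=
  ⋂ x ∈ X, closedNbhd Γ x

/-- Neighbourhood closure X̂ = N[N[X]]. -/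
def nbhdClosure {V : Type*} (Γ : SimpleGraph V) (X : Set V) : Set V :=
  closedNbhdSet Γ (closedNbhdSet Γ X)

/-- Closed twin class of a vertex. -/
def twinClass {V : Type*} (Γ : SimpleGraph V) (y : V) : Set V :=
  {x | closedNbhd Γ x = closedNbhd Γ y}

/-- The power graph of a group. -/
def powerGraph (G : Type*) [Group G] : SimpleGraph G where
  Adj x y := x ≠ y ∧ ((∃ m : ℕ, 0 < m ∧ y = x ^ m) ∨ (∃ m : ℕ, 0 < m ∧ x = y ^ m))
  symm := ⟨by rintro x y ⟨h, h2⟩; exact ⟨h.symm, h2.symm⟩⟩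
  loopless := ⟨by rintro x ⟨h, _⟩; exact h rfl⟩

/-- The ⋄-class of an element: elements generating the same cyclic subgroup. -/
def diamondClass {G : Type*} [Group G] (y : G) : Set G :=
  {x | Subgroup.zpowers x = Subgroup.zpowers y}

open Subgroup

section Aux
variable {G : Type*} [Group G] [Fintype G]

lemma exists_pos_pow_iff {x z : G} : (∃ m : ℕ, 0 < m ∧ z = x ^ m) ↔ z ∈ zpowers x := by
  constructor
  · rintro ⟨m, _, rfl⟩
    exact mem_zpowers_iff.mpr ⟨(m : ℤ), zpow_natCast x m⟩
  · intro hz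
    obtain ⟨k, hk⟩ := (Submonoid.mem_powers_iff _ _).1 ((mem_powers_iff_mem_zpowers).2 hz)
    exact ⟨k + orderOf x, Nat.add_pos_right k (orderOf_pos x),
      by rw [pow_add, pow_orderOf_eq_one, mul_one, hk]⟩

lemma mem_closedNbhd_iff {x z : G} :
    z ∈ closedNbhd (powerGraph G) x ↔ (z ∈ zpowers x ∨ x ∈ zpowers z) := by
  constructor
  · rintro (h | h)
    · exact h.2.imp (fun h' => exists_pos_pow_iff.1 h') (fun h' => exists_pos_pow_iff.1 h')
    · exact Or.inl (h ▸ mem_zpowers x)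
  · intro h
    by_cases hzx : z = x
    · exact Or.inr hzx
    · exact Or.inl ⟨Ne.symm hzx, h.imp (fun h' => exists_pos_pow_iff.2 h')
        (fun h' => exists_pos_pow_iff.2 h')⟩

lemma adj_iff {x z : G} :
    (powerGraph G).Adj x z ↔ x ≠ z ∧ (z ∈ zpowers x ∨ x ∈ zpowers z) := by
  constructor
  · rintro ⟨h1, h2⟩
    exact ⟨h1, h2.imp (fun h' => exists_pos_pow_iff.1 h') (fun h' => exists_pos_pow_iff.1 h')⟩
  · rintro ⟨h1, h2⟩
    exact ⟨h1, h2.imp (fun h' => exists_pos_pow_iff.2 h') (fun h' => exists_pos_pow_iff.2 h')⟩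

lemma self_mem_closedNbhd {V : Type*} (Γ : SimpleGraph V) (x : V) : x ∈ closedNbhd Γ x :=
  Or.inr rfl

lemma closedNbhd_one : closedNbhd (powerGraph G) (1 : G) = Set.univ := by
  ext z; simp only [Set.mem_univ, iff_true]
  exact mem_closedNbhd_iff.2 (Or.inr (one_mem _))

lemma mem_closedNbhdSet_iff {V : Type*} {Γ : SimpleGraph V} {X : Set V} {v : V} :
    v ∈ closedNbhdSet Γ X ↔ ∀ c ∈ X, v ∈ closedNbhd Γ c := by
  simp [closedNbhdSet]

/-- cyclic-subgroup divisibility lemma -/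
lemma mem_zpowers_of_orderOf_dvd {g a w : G} (ha : a ∈ zpowers g) (hw : w ∈ zpowers g)
    (hdvd : orderOf a ∣ orderOf w) : a ∈ zpowers w := by
  obtain ⟨i, hi⟩ := (Submonoid.mem_powers_iff _ _).1 ((mem_powers_iff_mem_zpowers).2 ha)
  obtain ⟨j, hj⟩ := (Submonoid.mem_powers_iff _ _).1 ((mem_powers_iff_mem_zpowers).2 hw)
  subst hi; subst hj
  set n := orderOf g with hn_def
  have hn : 0 < n := orderOf_pos g
  set d := Nat.gcd n j with hd_def
  set e := Nat.gcd n i with he_def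
  have hd : d ∣ n := Nat.gcd_dvd_left _ _
  have he : e ∣ n := Nat.gcd_dvd_left _ _
  -- g ^ d ∈ zpowers (g ^ j)
  have h1 : g ^ d ∈ zpowers (g ^ j) := by
    have hb : (d : ℤ) = n * Nat.gcdA n j + j * Nat.gcdB n j := Nat.gcd_eq_gcd_ab n j
    refine ⟨Nat.gcdB n j, ?_⟩
    rw [← zpow_natCast g d, hb, zpow_add, zpow_mul, zpow_mul, zpow_natCast, zpow_natCast,
      pow_orderOf_eq_one, one_zpow, one_mul]
  -- order computations
  have hoa : orderOf (g ^ i) = n / e := by rw [orderOf_pow]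
  have how : orderOf (g ^ j) = n / d := by rw [orderOf_pow]
  have h2 : n / e ∣ n / d := by rw [← hoa, ← how]; exact hdvd
  have hepos : 0 < e := Nat.gcd_pos_of_pos_left i hn
  have hdpos : 0 < d := Nat.gcd_pos_of_pos_left j hn
  have hnepos : 0 < n / e := Nat.div_pos (Nat.le_of_dvd hn he) hepos
  obtain ⟨t, ht⟩ := h2
  have hde : d ∣ e := by
    have hkey : e * (n / e) = d * t * (n / e) := by
      rw [Nat.mul_div_cancel' he]
      calc n = d * (n / d) := (Nat.mul_div_cancel' hd).symm
        _ = d * (n / e * t) := by rw [← ht]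
        _ = d * t * (n / e) := by ring
    exact ⟨t, Nat.eq_of_mul_eq_mul_right hnepos hkey⟩
  have hdi : d ∣ i := hde.trans (Nat.gcd_dvd_right n i)
  have h3 : g ^ i ∈ zpowers (g ^ d) := by
    refine mem_zpowers_iff.mpr ⟨((i / d : ℕ) : ℤ), ?_⟩
    rw [zpow_natCast, ← pow_mul, Nat.mul_div_cancel' hdi]
  exact (zpowers_le.2 h1) h3

lemma zpowers_eq_of_orderOf_eq {g a : G} (ha : a ∈ zpowers g) (h : orderOf a = orderOf g) :
    zpowers a = zpowers g :=
  le_antisymm (zpowers_le.2 ha)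
    (zpowers_le.2 (mem_zpowers_of_orderOf_dvd (mem_zpowers g) ha (h ▸ dvd_refl _)))

lemma orderOf_eq_of_zpowers_eq {a b : G} (h : zpowers a = zpowers b) :
    orderOf a = orderOf b := by
  rw [← Nat.card_zpowers, ← Nat.card_zpowers, h]

lemma orderOf_pow_div {y : G} {k : ℕ} (hk : k ∣ orderOf y) :
    orderOf (y ^ (orderOf y / k)) = k := by
  rw [orderOf_pow, Nat.gcd_eq_right (Nat.div_dvd_of_dvd hk),
    Nat.div_div_self hk (orderOf_pos y).ne']

end Aux
set_option linter.unusedSectionVars false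

section Aux2
variable {G : Type*} [Group G] [Fintype G]
open Subgroup

/-- Number theory: comparability with all divisors forces a prime power. -/
lemma nt_primepow {n m : ℕ} (hm1 : 1 < m) (hmn : m < n) (hmdvd : m ∣ n)
    (H : ∀ k, k ∣ n → m ∣ k ∨ k ∣ m) : ∃ q b : ℕ, q.Prime ∧ 0 < b ∧ n = q ^ b := by
  have hn0 : n ≠ 0 := by omega
  by_cases hall : ∀ q : ℕ, q.Prime → q ∣ n → ordProj[q] n ∣ m
  · exfalso
    have hnm : n ∣ m := by
      rw [Nat.dvd_iff_prime_pow_dvd_dvd m n]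
      intro p k hp hpk
      rcases Nat.eq_zero_or_pos k with rfl | hk
      · simpa using one_dvd m
      · have hpn : p ∣ n := (dvd_pow_self p hk.ne').trans hpk
        have hp' : p.Prime := hp
        have h1 : p ^ k ∣ ordProj[p] n :=
          pow_dvd_pow p ((Nat.Prime.pow_dvd_iff_le_factorization hp' hn0).1 hpk)
        exact h1.trans (hall p hp' hpn)
    exact absurd (Nat.le_of_dvd (by omega) hnm) (by omega)
  · push_neg at hall
    obtain ⟨q, hq, hqn, hqm⟩ := hall
    have hv : 0 < n.factorization q := hq.factorization_pos_of_dvd hn0 hqn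
    have hcase := H (ordProj[q] n) (Nat.ordProj_dvd n q)
    have hm_pow : m ∣ q ^ n.factorization q := hcase.resolve_right hqm
    obtain ⟨a, ha_le, ham⟩ := (Nat.dvd_prime_pow hq).1 hm_pow
    have ha1 : 0 < a := by
      rcases Nat.eq_zero_or_pos a with rfl | h; · simp at ham; omega
      · exact h
    have huniq : ∀ {d : ℕ}, d.Prime → d ∣ n → d = q := by
      intro d hd hdn
      by_contra hdq
      have hvd : 0 < n.factorization d := hd.factorization_pos_of_dvd hn0 hdn
      have hcase2 := H (ordProj[d] n) (Nat.ordProj_dvd n d)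
      rcases hcase2 with h | h
      · -- m ∣ d ^ _, but q ∣ m
        have hqm' : q ∣ m := ham ▸ dvd_pow_self q ha1.ne'
        have hqd : q ∣ d ^ n.factorization d := hqm'.trans h
        exact hdq ((Nat.prime_dvd_prime_iff_eq hq hd).1 (hq.dvd_of_dvd_pow hqd)).symm
      · -- d ^ _ ∣ m = q ^ a
        have hdm : d ∣ m := (dvd_pow_self d hvd.ne').trans h
        have : d ∣ q ^ a := ham ▸ hdm
        exact hdq ((Nat.prime_dvd_prime_iff_eq hd hq).1 (hd.dvd_of_dvd_pow this))
    have := Nat.eq_prime_pow_of_unique_prime_dvd hn0 huniq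
    refine ⟨q, n.primeFactorsList.length, hq, ?_, this⟩
    rcases Nat.eq_zero_or_pos n.primeFactorsList.length with h0 | h; · simp [h0] at this; omega
    · exact h
end Aux2
section Aux3
variable {G : Type*} [Group G] [Fintype G]
open Subgroup

/-- If `c` and `z` are closed twins in the power graph with `⟨c⟩ < ⟨z⟩` and `c ≠ 1`,
then the order of `z` is a prime power. -/
lemma pp_lemma {c z : G} (hN : closedNbhd (powerGraph G) c = closedNbhd (powerGraph G) z)
    (hlt : zpowers c < zpowers z) (hc1 : c ≠ 1) :
    ∃ q b : ℕ, q.Prime ∧ 0 < b ∧ orderOf z = q ^ b := by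
  set n := orderOf z with hn_def
  set m := orderOf c with hm_def
  have hcz : c ∈ zpowers z := hlt.le (mem_zpowers c)
  have hmn_dvd : m ∣ n := orderOf_dvd_of_mem_zpowers hcz
  have hm1 : 1 < m := by
    have hmpos : 0 < m := orderOf_pos c
    have hmne : m ≠ 1 := fun h => hc1 (orderOf_eq_one_iff.1 (by rw [← hm_def]; exact h))
    omega
  have hmn : m ≠ n := by
    intro h
    exact hlt.ne (zpowers_eq_of_orderOf_eq hcz h)
  have hmltn : m < n := lt_of_le_of_ne (Nat.le_of_dvd (orderOf_pos z) hmn_dvd) hmn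
  apply nt_primepow hm1 hmltn hmn_dvd
  intro k hk
  have hk0 : k ≠ 0 := by rintro rfl; exact (orderOf_pos z).ne' (Nat.eq_zero_of_zero_dvd hk)
  set w := z ^ (n / k) with hw_def
  have how : orderOf w = k := orderOf_pow_div hk
  have hwz : w ∈ zpowers z := (zpowers z).pow_mem (mem_zpowers z) _
  have hw_mem : w ∈ closedNbhd (powerGraph G) c := by
    rw [hN]; exact mem_closedNbhd_iff.2 (Or.inl hwz)
  rcases mem_closedNbhd_iff.1 hw_mem with h | h
  · exact Or.inr (how ▸ orderOf_dvd_of_mem_zpowers h)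
  · exact Or.inl (how ▸ orderOf_dvd_of_mem_zpowers h)

/-- existence of a second prime divisor -/
lemma nt2 {n q : ℕ} (hn : n ≠ 0) (hnpp : ¬ IsPrimePow n) (hq : q.Prime) (hqn : q ∣ n) :
    ∃ q' : ℕ, q'.Prime ∧ q' ∣ n ∧ q' ≠ q := by
  rcases eq_or_ne (ordCompl[q] n) 1 with h1 | h1
  · exfalso
    have h2 : q ^ n.factorization q * ordCompl[q] n = n := Nat.ordProj_mul_ordCompl_eq_self n q
    rw [h1, mul_one] at h2
    exact hnpp ⟨q, n.factorization q, hq.prime, hq.factorization_pos_of_dvd hn hqn, h2⟩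
  · exact ⟨(ordCompl[q] n).minFac, Nat.minFac_prime h1,
      (Nat.minFac_dvd _).trans (Nat.ordCompl_dvd n q),
      fun h => Nat.not_dvd_ordCompl hq hn (by
        have hd := Nat.minFac_dvd (ordCompl[q] n)
        rw [h] at hd; exact hd)⟩

/-- comparability inside a cyclic group of prime power order -/
lemma primepow_cmp {z u v : G} {q b : ℕ} (hq : q.Prime) (hoz : orderOf z = q ^ b)
    (hu : u ∈ zpowers z) (hv : v ∈ zpowers z) : u ∈ zpowers v ∨ v ∈ zpowers u := by
  obtain ⟨i, hi_le, hiu⟩ := (Nat.dvd_prime_pow hq).1 (hoz ▸ orderOf_dvd_of_mem_zpowers hu)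
  obtain ⟨j, hj_le, hjv⟩ := (Nat.dvd_prime_pow hq).1 (hoz ▸ orderOf_dvd_of_mem_zpowers hv)
  rcases le_total i j with h | h
  · exact Or.inl (mem_zpowers_of_orderOf_dvd hu hv (hiu ▸ hjv ▸ pow_dvd_pow q h))
  · exact Or.inr (mem_zpowers_of_orderOf_dvd hv hu (hiu ▸ hjv ▸ pow_dvd_pow q h))

lemma diamond_subset_twin (y : G) : diamondClass y ⊆ twinClass (powerGraph G) y := by
  intro u hu
  have hu' : zpowers u = zpowers y := hu
  show closedNbhd (powerGraph G) u = closedNbhd (powerGraph G) y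
  ext t
  rw [mem_closedNbhd_iff, mem_closedNbhd_iff, hu']
  refine or_congr Iff.rfl ⟨fun h => ?_, fun h => ?_⟩
  · have h2 : zpowers u ≤ zpowers t := zpowers_le.2 h
    rw [hu'] at h2
    exact h2 (mem_zpowers y)
  · have h2 : zpowers y ≤ zpowers t := zpowers_le.2 h
    rw [← hu'] at h2
    exact h2 (mem_zpowers u)

lemma self_mem_twinClass {V : Type*} (Γ : SimpleGraph V) (y : V) : y ∈ twinClass Γ y := rfl

lemma ncard_zpowers_set (x : G) : ((zpowers x : Subgroup G) : Set G).ncard = orderOf x := by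
  rw [← Nat.card_coe_set_eq]
  rw [show ((zpowers x : Subgroup G) : Set G) = (zpowers x : Subgroup G) from rfl]
  exact Nat.card_zpowers x

end Aux3
section Aux4
variable {G : Type*} [Group G] [Fintype G]
open Subgroup

lemma twin_subset_diamond (hstar : {x : G | closedNbhd (powerGraph G) x = Set.univ} = {1})
    {y x : G} (hxy : x ∈ zpowers y) (hx1 : x ≠ 1) (hy1 : y ≠ 1)
    (hnpp : ¬ IsPrimePow (orderOf y)) :
    twinClass (powerGraph G) x ⊆ diamondClass x := by
  intro u hu
  by_contra hne
  have hne' : zpowers u ≠ zpowers x := hne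
  have hNux : closedNbhd (powerGraph G) u = closedNbhd (powerGraph G) x := hu
  have hx_mem : x ∈ closedNbhd (powerGraph G) u := by
    rw [hNux]; exact self_mem_closedNbhd _ _
  obtain ⟨c', z', hlt, hNc, hNz⟩ :
      ∃ c' z' : G, zpowers c' < zpowers z' ∧
        closedNbhd (powerGraph G) c' = closedNbhd (powerGraph G) x ∧
        closedNbhd (powerGraph G) z' = closedNbhd (powerGraph G) x := by
    rcases mem_closedNbhd_iff.1 hx_mem with h | h
    · exact ⟨x, u, lt_of_le_of_ne (zpowers_le.2 h) (Ne.symm hne'), rfl, hNux⟩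
    · exact ⟨u, x, lt_of_le_of_ne (zpowers_le.2 h) hne', hNux, rfl⟩
  have hc1 : c' ≠ 1 := by
    rintro rfl
    have huni : closedNbhd (powerGraph G) x = Set.univ := by rw [← hNc]; exact closedNbhd_one
    have hxs : x ∈ {x : G | closedNbhd (powerGraph G) x = Set.univ} := huni
    rw [hstar] at hxs
    exact hx1 hxs
  obtain ⟨q, b, hq, hb, hoz⟩ := pp_lemma (hNc.trans hNz.symm) hlt hc1
  set n := orderOf y with hn_def
  have hn1 : n ≠ 1 := fun h => hy1 (orderOf_eq_one_iff.1 (by rw [← hn_def]; exact h))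
  have hn0 : n ≠ 0 := (orderOf_pos y).ne'
  have hy_mem : y ∈ closedNbhd (powerGraph G) x := mem_closedNbhd_iff.2 (Or.inr hxy)
  have hz'y : z' ∈ zpowers y := by
    rcases mem_closedNbhd_iff.1 (hNz.symm ▸ hy_mem : y ∈ closedNbhd (powerGraph G) z')
      with h | h
    · exfalso
      obtain ⟨j, _, hjn⟩ := (Nat.dvd_prime_pow hq).1 (hoz ▸ orderOf_dvd_of_mem_zpowers h)
      have hj1 : 0 < j := by
        rcases Nat.eq_zero_or_pos j with rfl | hj; · simp at hjn; exact absurd hjn hy1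
        · exact hj
      exact hnpp ⟨q, j, hq.prime, hj1, hjn.symm⟩
    · exact h
  have hcz' : c' ∈ zpowers z' := hlt.le (mem_zpowers c')
  obtain ⟨a, ha_le, hoa⟩ := (Nat.dvd_prime_pow hq).1 (hoz ▸ orderOf_dvd_of_mem_zpowers hcz')
  have hc'y : c' ∈ zpowers y := by
    rcases mem_closedNbhd_iff.1 (hNc.symm ▸ hy_mem : y ∈ closedNbhd (powerGraph G) c')
      with h | h
    · exfalso
      have hna : n ∣ q ^ a := hoa ▸ orderOf_dvd_of_mem_zpowers h
      obtain ⟨j, _, hjn⟩ := (Nat.dvd_prime_pow hq).1 hna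
      have hj1 : 0 < j := by
        rcases Nat.eq_zero_or_pos j with rfl | hj; · simp at hjn; exact absurd hjn hn1
        · exact hj
      exact hnpp ⟨q, j, hq.prime, hj1, hjn.symm⟩
    · exact h
  have ha1 : 0 < a := by
    rcases Nat.eq_zero_or_pos a with rfl | h
    · exfalso; rw [pow_zero] at hoa; exact hc1 (orderOf_eq_one_iff.1 hoa)
    · exact h
  have hab : a < b := lt_of_le_of_ne ha_le
    (fun h => hlt.ne (zpowers_eq_of_orderOf_eq hcz' (by rw [hoa, hoz, h])))
  have hqbn : q ^ b ∣ n := hoz ▸ orderOf_dvd_of_mem_zpowers hz'y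
  obtain ⟨q', hq', hq'n, hq'q⟩ := nt2 hn0 hnpp hq ((dvd_pow_self q hb.ne').trans hqbn)
  have hcop : Nat.Coprime q q' := (Nat.coprime_primes hq hq').2 (fun hh => hq'q hh.symm)
  have hk : q ^ a * q' ∣ n :=
    Nat.Coprime.mul_dvd_of_dvd_of_dvd (hcop.pow_left a)
      ((pow_dvd_pow q hab.le).trans hqbn) hq'n
  set w := y ^ (n / (q ^ a * q')) with hw_def
  have how : orderOf w = q ^ a * q' := orderOf_pow_div hk
  have hwy : w ∈ zpowers y := (zpowers y).pow_mem (mem_zpowers y) _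
  have hcw : c' ∈ zpowers w := mem_zpowers_of_orderOf_dvd hc'y hwy
    (by rw [hoa, how]; exact dvd_mul_right _ _)
  have hw_mem : w ∈ closedNbhd (powerGraph G) c' := mem_closedNbhd_iff.2 (Or.inr hcw)
  rw [hNc, ← hNz] at hw_mem
  rcases mem_closedNbhd_iff.1 hw_mem with h | h
  · have hd : q' ∣ q ^ b := (dvd_mul_left q' (q ^ a)).trans
      (by rw [← how, ← hoz]; exact orderOf_dvd_of_mem_zpowers h)
    exact hq'q ((Nat.prime_dvd_prime_iff_eq hq' hq).1 (hq'.dvd_of_dvd_pow hd))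
  · have h2 : q ^ b ∣ q ^ a * q' := by
      rw [← hoz, ← how]; exact orderOf_dvd_of_mem_zpowers h
    have h3 : q ^ b ∣ q ^ a := (Nat.Coprime.dvd_of_dvd_mul_right (hcop.pow_left b) h2)
    have hba : b ≤ a := (pow_dvd_pow_iff hq.pos.ne'
      (fun hu' => hq.ne_one (Nat.isUnit_iff.1 hu'))).1 h3
    omega
end Aux4
section Aux5
variable {G : Type*} [Group G] [Fintype G]
open Subgroup

lemma ncard_ge_of_pow_family {x : G} {S : Set G} (K : ℕ) (e : ℕ → ℕ)
    (he_mem : ∀ i < K, x ^ (e i) ∈ S) (he_lt : ∀ i < K, e i < orderOf x)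
    (he_inj : ∀ i < K, ∀ j < K, e i = e j → i = j) : K ≤ S.ncard := by
  classical
  have hsub : (↑((Finset.range K).image (fun i => x ^ (e i))) : Set G) ⊆ S := by
    intro g hg
    rw [Finset.coe_image, Set.mem_image] at hg
    obtain ⟨i, hi, rfl⟩ := hg
    rw [Finset.mem_coe, Finset.mem_range] at hi
    exact he_mem i hi
  have hcard : ((Finset.range K).image (fun i => x ^ (e i))).card = K := by
    rw [Finset.card_image_of_injOn, Finset.card_range]
    intro i hi j hj hij
    rw [Finset.mem_coe, Finset.mem_range] at hi hj
    exact he_inj i hi j hj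
      (pow_injOn_Iio_orderOf (he_lt i hi) (he_lt j hj) hij)
  calc K = ((Finset.range K).image (fun i => x ^ (e i))).card := hcard.symm
    _ = (↑((Finset.range K).image (fun i => x ^ (e i))) : Set G).ncard :=
        (Set.ncard_coe_finset _).symm
    _ ≤ S.ncard := Set.ncard_le_ncard hsub (Set.toFinite S)

lemma twin_ncard_le {x : G} (h : twinClass (powerGraph G) x ⊆ diamondClass x) (hx1 : x ≠ 1) :
    (twinClass (powerGraph G) x).ncard ≤ orderOf x - 1 := by
  have hsub : twinClass (powerGraph G) x ⊆ (↑(zpowers x) : Set G) \ {1} := by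
    intro u hu
    have hd : zpowers u = zpowers x := h hu
    refine ⟨?_, ?_⟩
    · exact hd ▸ mem_zpowers u
    · intro h1
      rw [Set.mem_singleton_iff] at h1
      subst h1
      apply hx1
      have : x ∈ zpowers (1 : G) := hd ▸ mem_zpowers x
      rwa [zpowers_one_eq_bot, Subgroup.mem_bot] at this
  calc (twinClass (powerGraph G) x).ncard
      ≤ ((↑(zpowers x) : Set G) \ {1}).ncard := Set.ncard_le_ncard hsub (Set.toFinite _)
    _ = (↑(zpowers x) : Set G).ncard - 1 := by
        rw [Set.ncard_diff_singleton_of_mem (by exact one_mem (zpowers x))]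
    _ = orderOf x - 1 := by rw [ncard_zpowers_set]
end Aux5

/-- A critical class: Ĉ = C ∪̇ {1} and |Ĉ| = p^r for a prime p and r ≥ 2. -/
def IsCritical {G : Type*} [Group G] (P : SimpleGraph G) (C : Set G) : Prop :=
  nbhdClosure P C = C ∪ {1} ∧ (1 : G) ∉ C ∧
    ∃ p r : ℕ, p.Prime ∧ 2 ≤ r ∧ (nbhdClosure P C).ncard = p ^ r

theorem stmt16 {G : Type*} [Group G] [Fintype G]
    (hstar : {x : G | closedNbhd (powerGraph G) x = Set.univ} = {1})
    (y : G) (C : Set G) (hC : C = twinClass (powerGraph G) y)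
    (hcrit : IsCritical (powerGraph G) C) :
    C = diamondClass y ↔
      ∃ x : G, x ∉ nbhdClosure (powerGraph G) C ∧
        (twinClass (powerGraph G) x).ncard ≤ C.ncard ∧ (powerGraph G).Adj x y := by
  classical
  obtain ⟨hhat_eq, h1C, p, r, hp, hr, hcard⟩ := hcrit
  have hy_mem : y ∈ C := hC ▸ self_mem_twinClass _ y
  have hy1 : y ≠ 1 := fun h => h1C (h ▸ hy_mem)
  have hCfin : C.Finite := Set.toFinite C
  have hCsucc : C.ncard + 1 = p ^ r := by
    rw [← hcard, hhat_eq, Set.union_singleton, Set.ncard_insert_of_notMem h1C hCfin]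
  constructor
  · -- plain → witness exists
    intro hplain
    set n := orderOf y with hn_def
    have hn0 : n ≠ 0 := (orderOf_pos y).ne'
    have hn1 : n ≠ 1 := fun h => hy1 (orderOf_eq_one_iff.1 (by rw [← hn_def]; exact h))
    -- n is not a prime power
    have hnpp : ¬ IsPrimePow n := by
      rintro ⟨q, s, hqp, hs, hqs⟩
      have hq : q.Prime := Nat.prime_iff.mpr hqp
      have hoy : orderOf y = q ^ s := by rw [← hn_def, ← hqs]
      have hsub : (↑(zpowers y) : Set G) ⊆ nbhdClosure (powerGraph G) C := by
        intro u hu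
        have hu' : u ∈ zpowers y := hu
        rw [show nbhdClosure (powerGraph G) C
            = closedNbhdSet (powerGraph G) (closedNbhdSet (powerGraph G) C) from rfl,
          mem_closedNbhdSet_iff]
        intro v hv
        have hvy : v ∈ closedNbhd (powerGraph G) y := (mem_closedNbhdSet_iff.1 hv) y hy_mem
        rcases mem_closedNbhd_iff.1 hvy with h | h
        · exact mem_closedNbhd_iff.2 (primepow_cmp hq hoy hu' h)
        · exact mem_closedNbhd_iff.2 (Or.inl (zpowers_le.2 h hu'))
      have hqn : q ∣ n := by rw [← hqs]; exact dvd_pow_self q hs.ne'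
      have hou0 : orderOf (y ^ q) = n / q := by
        rw [orderOf_pow, ← hn_def, Nat.gcd_eq_right hqn]
      have hu0hat : y ^ q ∈ nbhdClosure (powerGraph G) C :=
        hsub ((zpowers y).pow_mem (mem_zpowers y) q)
      rw [hhat_eq] at hu0hat
      rcases hu0hat with h | h
      · rw [hplain] at h
        have h2 := orderOf_eq_of_zpowers_eq h
        rw [hou0, ← hn_def] at h2
        have hlt : n / q < n := Nat.div_lt_self (Nat.pos_of_ne_zero hn0) hq.one_lt
        omega
      · have h1 : y ^ q = 1 := h
        have hnq : n ∣ q := by rw [hn_def]; exact orderOf_dvd_of_pow_eq_one h1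
        have hqn' : n = q := Nat.dvd_antisymm hnq hqn
        have hCset : nbhdClosure (powerGraph G) C = ↑(zpowers y) := by
          apply Set.Subset.antisymm
          · rw [hhat_eq, hplain]
            rintro t (ht | ht)
            · have ht' : zpowers t = zpowers y := ht
              exact ht' ▸ mem_zpowers t
            · rw [Set.mem_singleton_iff] at ht
              exact ht ▸ one_mem (zpowers y)
          · exact hsub
        rw [hCset, ncard_zpowers_set, ← hn_def, hqn'] at hcard
        have hpq : p = q := (Nat.prime_dvd_prime_iff_eq hp hq).1
          (by rw [hcard]; exact dvd_pow_self p (by omega))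
        subst hpq
        have : 1 = r := Nat.pow_right_injective hp.two_le
          (by show p ^ 1 = p ^ r; rw [pow_one]; exact hcard)
        omega
    -- the witness
    set q := n.minFac with hq_def
    have hq : q.Prime := Nat.minFac_prime hn1
    have hqn : q ∣ n := Nat.minFac_dvd n
    have hqltn : q < n := by
      rcases lt_or_eq_of_le (Nat.le_of_dvd (Nat.pos_of_ne_zero hn0) hqn) with h | h
      · exact h
      · exact absurd ⟨q, 1, hq.prime, one_pos, by rw [pow_one, h]⟩ hnpp
    set x := y ^ (n / q) with hx_def
    have hox : orderOf x = q := by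
      rw [hx_def, hn_def]; exact orderOf_pow_div (by rw [← hn_def]; exact hqn)
    have hx1 : x ≠ 1 := fun h => hq.ne_one (by rw [← hox, h, orderOf_one])
    have hxy : x ∈ zpowers y := (zpowers y).pow_mem (mem_zpowers y) _
    have hxny : x ≠ y := by
      intro h
      rw [h, ← hn_def] at hox
      omega
    refine ⟨x, ?_, ?_, ?_⟩
    · rw [hhat_eq]
      rintro (h | h)
      · rw [hplain] at h
        have h2 := orderOf_eq_of_zpowers_eq h
        rw [hox, ← hn_def] at h2
        omega
      · exact hx1 h
    · have hck := twin_subset_diamond hstar hxy hx1 hy1 hnpp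
      have hupper : (twinClass (powerGraph G) x).ncard ≤ q - 1 := by
        have h2 := twin_ncard_le hck hx1
        rwa [hox] at h2
      have hlower : q - 1 ≤ C.ncard := by
        rw [hplain]
        apply ncard_ge_of_pow_family (x := y) (q - 1) (fun j => j + 1)
        · intro j hj
          have hcop : Nat.Coprime n (j + 1) := by
            rcases eq_or_ne (Nat.gcd n (j + 1)) 1 with h | h
            · exact h
            · exfalso
              have hmf : (Nat.gcd n (j + 1)).minFac.Prime := Nat.minFac_prime h
              have h5 : q ≤ (Nat.gcd n (j + 1)).minFac :=
                Nat.minFac_le_of_dvd hmf.two_le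
                  ((Nat.minFac_dvd _).trans (Nat.gcd_dvd_left _ _))
              have h6 : (Nat.gcd n (j + 1)).minFac ≤ j + 1 :=
                Nat.le_of_dvd (by omega) ((Nat.minFac_dvd _).trans (Nat.gcd_dvd_right _ _))
              omega
          have ho : orderOf (y ^ (j + 1)) = n := by
            rw [orderOf_pow, ← hn_def, Nat.Coprime.gcd_eq_one hcop, Nat.div_one]
          exact zpowers_eq_of_orderOf_eq ((zpowers y).pow_mem (mem_zpowers y) _)
            (by rw [ho, hn_def])
        · intro j hj
          rw [← hn_def]; omega
        · intro i _ j _ h; omega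
      omega
    · exact adj_iff.2 ⟨hxny, Or.inr hxy⟩
  · -- witness exists → plain
    rintro ⟨x, hxhat, hxcard, hxadj⟩
    have hdsub : diamondClass y ⊆ C := by rw [hC]; exact diamond_subset_twin y
    apply Set.Subset.antisymm _ hdsub
    intro c hc
    by_contra hcy
    have hcy' : zpowers c ≠ zpowers y := hcy
    have htwin : ∀ u ∈ C, closedNbhd (powerGraph G) u = closedNbhd (powerGraph G) y :=
      fun u hu => (hC ▸ hu : u ∈ twinClass (powerGraph G) y)
    obtain ⟨z, hzC, hzmax⟩ := Set.exists_max_image C orderOf hCfin ⟨y, hy_mem⟩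
    have hsubz : ∀ u ∈ C, u ∈ zpowers z := by
      intro u hu
      have h1 : u ∈ closedNbhd (powerGraph G) z := by
        rw [htwin z hzC, ← htwin u hu]; exact self_mem_closedNbhd _ _
      rcases mem_closedNbhd_iff.1 h1 with h | h
      · exact h
      · have hd := orderOf_dvd_of_mem_zpowers h
        have heq : orderOf z = orderOf u :=
          le_antisymm (Nat.le_of_dvd (orderOf_pos u) hd) (hzmax u hu)
        rw [zpowers_eq_of_orderOf_eq h heq]
        exact mem_zpowers u
    obtain ⟨c₀, hc₀C, hlt⟩ : ∃ c₀ ∈ C, zpowers c₀ < zpowers z := by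
      by_cases hcz : zpowers c = zpowers z
      · refine ⟨y, hy_mem, lt_of_le_of_ne (zpowers_le.2 (hsubz y hy_mem)) ?_⟩
        intro h
        exact hcy' (hcz.trans h.symm)
      · exact ⟨c, hc, lt_of_le_of_ne (zpowers_le.2 (hsubz c hc)) hcz⟩
    have hc₀1 : c₀ ≠ 1 := fun h => h1C (h ▸ hc₀C)
    have hNeq : closedNbhd (powerGraph G) c₀ = closedNbhd (powerGraph G) z := by
      rw [htwin c₀ hc₀C, htwin z hzC]
    obtain ⟨q, b, hq, hb, hoz⟩ := pp_lemma hNeq hlt hc₀1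
    have hc₀z : c₀ ∈ zpowers z := hlt.le (mem_zpowers c₀)
    obtain ⟨a, ha_le, hoa⟩ :=
      (Nat.dvd_prime_pow hq).1 (hoz ▸ orderOf_dvd_of_mem_zpowers hc₀z)
    have ha1 : 0 < a := by
      rcases Nat.eq_zero_or_pos a with rfl | h
      · exfalso; rw [pow_zero] at hoa; exact hc₀1 (orderOf_eq_one_iff.1 hoa)
      · exact h
    have hab : a < b := lt_of_le_of_ne ha_le
      (fun h => hlt.ne (zpowers_eq_of_orderOf_eq hc₀z (by rw [hoa, hoz, h])))
    have hhatz : nbhdClosure (powerGraph G) C = ↑(zpowers z) := by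
      apply Set.Subset.antisymm
      · rw [hhat_eq]
        rintro t (ht | ht)
        · exact hsubz t ht
        · rw [Set.mem_singleton_iff] at ht
          exact ht ▸ one_mem (zpowers z)
      · intro u hu
        have hu' : u ∈ zpowers z := hu
        rw [show nbhdClosure (powerGraph G) C
            = closedNbhdSet (powerGraph G) (closedNbhdSet (powerGraph G) C) from rfl,
          mem_closedNbhdSet_iff]
        intro v hv
        have hvz : v ∈ closedNbhd (powerGraph G) z := (mem_closedNbhdSet_iff.1 hv) z hzC
        rcases mem_closedNbhd_iff.1 hvz with h | h
        · exact mem_closedNbhd_iff.2 (primepow_cmp hq hoz hu' h)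
        · exact mem_closedNbhd_iff.2 (Or.inl (zpowers_le.2 h hu'))
    have hqb_card : q ^ b = p ^ r := by
      have h2 := hcard
      rw [hhatz, ncard_zpowers_set, hoz] at h2
      exact h2
    obtain ⟨hxny, hxcmp⟩ := adj_iff.1 hxadj
    have hxNy : x ∈ closedNbhd (powerGraph G) y := mem_closedNbhd_iff.2 hxcmp.symm
    have hxNz : x ∈ closedNbhd (powerGraph G) z := by
      rw [htwin z hzC]; exact hxNy
    have hxz : x ∉ (↑(zpowers z) : Set G) := by rw [← hhatz]; exact hxhat
    have hzx : z ∈ zpowers x := by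
      rcases mem_closedNbhd_iff.1 hxNz with h | h
      · exact absurd h hxz
      · exact h
    set N := orderOf x with hN_def
    have hN0 : N ≠ 0 := (orderOf_pos x).ne'
    have hqbN : q ^ b ∣ N := hoz ▸ orderOf_dvd_of_mem_zpowers hzx
    have hqunit : ¬ IsUnit q := fun hu' => hq.ne_one (Nat.isUnit_iff.1 hu')
    by_cases hcompl : ordCompl[q] N = 1
    · -- orderOf x is a power of q, strictly bigger than q ^ b : counting contradiction
      have hNs : N = q ^ N.factorization q := by
        have h2 := Nat.ordProj_mul_ordCompl_eq_self N q
        rw [hcompl, mul_one] at h2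
        exact h2.symm
      have hbs : b ≤ N.factorization q :=
        (pow_dvd_pow_iff hq.pos.ne' hqunit).1 (hNs ▸ hqbN)
      have hbs' : b < N.factorization q := by
        rcases lt_or_eq_of_le hbs with h | h
        · exact h
        · exfalso
          have heq : orderOf z = orderOf x := by rw [hoz, ← hN_def, hNs, h]
          exact hxz ((zpowers_eq_of_orderOf_eq hzx heq) ▸ mem_zpowers x)
      have hKle : q ^ b ≤ (twinClass (powerGraph G) x).ncard := by
        apply ncard_ge_of_pow_family (x := x) (q ^ b) (fun i => i * q + 1)
        · intro i hi
          have hnd : ¬ q ∣ i * q + 1 := by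
            intro hd
            have h1 : q ∣ i * q := dvd_mul_left q i
            have h2 : q ∣ 1 := (Nat.dvd_add_right h1).1 hd
            have h3 := Nat.le_of_dvd one_pos h2
            have h4 := hq.two_le
            omega
          have hcop : Nat.Coprime N (i * q + 1) := by
            rw [hNs]
            exact Nat.Coprime.pow_left _ ((Nat.Prime.coprime_iff_not_dvd hq).2 hnd)
          have ho : orderOf (x ^ (i * q + 1)) = N := by
            rw [orderOf_pow, ← hN_def, Nat.Coprime.gcd_eq_one hcop, Nat.div_one]
          exact diamond_subset_twin x
            (zpowers_eq_of_orderOf_eq ((zpowers x).pow_mem (mem_zpowers x) _)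
              (by rw [ho, hN_def]))
        · intro i hi
          have h1 : i * q + 1 < q ^ (b + 1) := by
            calc i * q + 1 < i * q + q := by have := hq.one_lt; omega
              _ = (i + 1) * q := by ring
              _ ≤ q ^ b * q := Nat.mul_le_mul_right q (by omega)
              _ = q ^ (b + 1) := by ring
          have h2 : q ^ (b + 1) ≤ q ^ N.factorization q :=
            Nat.pow_le_pow_right hq.pos (by omega)
          rw [← hN_def, hNs]
          omega
        · intro i _ j _ h
          have hq0 := hq.pos
          have : i * q = j * q := by omega
          exact Nat.eq_of_mul_eq_mul_right hq0 this
      omega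
    · -- there is a second prime q' dividing orderOf x : direct contradiction
      have hq' : (ordCompl[q] N).minFac.Prime := Nat.minFac_prime hcompl
      set q' := (ordCompl[q] N).minFac with hq'_def
      have hq'N : q' ∣ N := (Nat.minFac_dvd _).trans (Nat.ordCompl_dvd N q)
      have hq'q : q' ≠ q := by
        intro h
        apply Nat.not_dvd_ordCompl hq hN0
        have hd := Nat.minFac_dvd (ordCompl[q] N)
        rw [← hq'_def, h] at hd
        exact hd
      have hcop : Nat.Coprime q q' := (Nat.coprime_primes hq hq').2 (fun hh => hq'q hh.symm)
      have hk : q ^ a * q' ∣ N :=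
        Nat.Coprime.mul_dvd_of_dvd_of_dvd (hcop.pow_left a)
          ((pow_dvd_pow q hab.le).trans hqbN) hq'N
      have how : orderOf (x ^ (N / (q ^ a * q'))) = q ^ a * q' := by
        rw [hN_def]; exact orderOf_pow_div (by rw [← hN_def]; exact hk)
      set w := x ^ (N / (q ^ a * q')) with hw_def
      have hwx : w ∈ zpowers x := (zpowers x).pow_mem (mem_zpowers x) _
      have hc₀x : c₀ ∈ zpowers x := (zpowers_le.2 hzx) hc₀z
      have hcw : c₀ ∈ zpowers w := mem_zpowers_of_orderOf_dvd hc₀x hwx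
        (by rw [hoa, how]; exact dvd_mul_right _ _)
      have hw_mem : w ∈ closedNbhd (powerGraph G) c₀ := mem_closedNbhd_iff.2 (Or.inr hcw)
      rw [hNeq] at hw_mem
      rcases mem_closedNbhd_iff.1 hw_mem with h | h
      · have hd : q' ∣ q ^ b := (dvd_mul_left q' (q ^ a)).trans
          (by rw [← how, ← hoz]; exact orderOf_dvd_of_mem_zpowers h)
        exact hq'q ((Nat.prime_dvd_prime_iff_eq hq' hq).1 (hq'.dvd_of_dvd_pow hd))
      · have h2 : q ^ b ∣ q ^ a * q' := by
          rw [← hoz, ← how]; exact orderOf_dvd_of_mem_zpowers h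
        have h3 : q ^ b ∣ q ^ a := Nat.Coprime.dvd_of_dvd_mul_right (hcop.pow_left b) h2
        have hba : b ≤ a := (pow_dvd_pow_iff hq.pos.ne' hqunit).1 h3
        omega
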